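/- arXiv:2410.22656 — 3 statements merged into one kernel-verified Lean document; each statement's English description precedes it below -/
import Mathlib

section
/- For a random variable X with 0 < a < X < b < ∞ almost surely, the Jensen gap satisfies Var(X)/(2b²) ≤ log(E[X]) − E[log X] ≤ Var(X)/(2a²). -/
open MeasureTheory

private lemma hasDeriv_aux (m c y : ℝ) (hy : y ≠ 0) (hc : c ≠ 0) :
    HasDerivAt (fun t => Real.log m - Real.log t + (t - m)/m - (t - m)^2/(2*c^2))
      (-y⁻¹ + m⁻¹ - (y - m)/c^2) y := by
  have h1 := Real.hasDerivAt_log hy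
  have h2 : HasDerivAt (fun t : ℝ => (t - m)/m) m⁻¹ y := by
    simpa [one_div] using ((hasDerivAt_id y).sub_const m).div_const m
  have h3 : HasDerivAt (fun t : ℝ => (t - m)^2/(2*c^2)) ((y - m)/c^2) y := by
    have := (((hasDerivAt_id y).sub_const m).pow 2).div_const (2*c^2)
    exact this.congr_deriv (by simp; field_simp)
  have := (((hasDerivAt_const y (Real.log m)).sub h1).add h2).sub h3
  exact this.congr_deriv (by ring)

private lemma cont_aux (m c : ℝ) (s : Set ℝ) (hs : ∀ y ∈ s, y ≠ 0) :
    ContinuousOn (fun t => Real.log m - Real.log t + (t - m)/m - (t - m)^2/(2*c^2)) s := by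
  apply ContinuousOn.sub
  apply ContinuousOn.add
  apply ContinuousOn.sub continuousOn_const
  · exact Real.continuousOn_log.mono (fun y hy => hs y hy)
  · exact (continuous_id.sub continuous_const).continuousOn.div_const m
  · exact (((continuous_id.sub continuous_const).pow 2).continuousOn).div_const _

private lemma aux_lower (m c x : ℝ) (hm : 0 < m) (hx : 0 < x) (hmc : m ≤ c) (hxc : x ≤ c) :
    (x - m)^2 / (2*c^2) ≤ Real.log m - Real.log x + (x - m)/m := by
  have hc : 0 < c := lt_of_lt_of_le hm hmc
  have key : (0:ℝ) ≤ Real.log m - Real.log m + (m - m)/m - (m - m)^2/(2*c^2) →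
      (0:ℝ) ≤ Real.log m - Real.log x + (x - m)/m - (x - m)^2/(2*c^2) → True := fun _ _ => trivial
  suffices h : 0 ≤ Real.log m - Real.log x + (x - m)/m - (x - m)^2/(2*c^2) by linarith
  set F := fun t => Real.log m - Real.log t + (t - m)/m - (t - m)^2/(2*c^2) with hF
  show 0 ≤ F x
  have hFm : F m = 0 := by simp [hF]
  rcases le_total m x with h | h
  · have mono : MonotoneOn F (Set.Icc m x) := by
      apply monotoneOn_of_deriv_nonneg (convex_Icc m x)
      · exact cont_aux m c _ (fun y hy => (lt_of_lt_of_le hm hy.1).ne')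
      · intro y hy
        rw [interior_Icc] at hy
        exact ((hasDeriv_aux m c y (lt_trans hm hy.1).ne' hc.ne').differentiableAt).differentiableWithinAt
      · intro y hy
        rw [interior_Icc] at hy
        have hy0 : 0 < y := lt_trans hm hy.1
        rw [(hasDeriv_aux m c y hy0.ne' hc.ne').deriv]
        have e : -y⁻¹ + m⁻¹ = (y - m)/(m*y) := by field_simp; ring
        have hmy : m*y ≤ c^2 := by nlinarith [mul_le_mul hmc (hy.2.le.trans hxc) hy0.le hc.le]
        have key : (y - m)/c^2 ≤ (y - m)/(m*y) := by
          rw [div_le_div_iff₀ (by positivity) (by positivity)]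
          nlinarith [mul_nonneg (sub_nonneg.2 hy.1.le) (sub_nonneg.2 hmy)]
        linarith
    have := mono (Set.left_mem_Icc.2 h) (Set.right_mem_Icc.2 h) h
    linarith [hFm ▸ this]
  · have anti : AntitoneOn F (Set.Icc x m) := by
      apply antitoneOn_of_deriv_nonpos (convex_Icc x m)
      · exact cont_aux m c _ (fun y hy => (lt_of_lt_of_le hx hy.1).ne')
      · intro y hy
        rw [interior_Icc] at hy
        exact ((hasDeriv_aux m c y (lt_trans hx hy.1).ne' hc.ne').differentiableAt).differentiableWithinAt
      · intro y hy
        rw [interior_Icc] at hy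
        have hy0 : 0 < y := lt_trans hx hy.1
        rw [(hasDeriv_aux m c y hy0.ne' hc.ne').deriv]
        have e : -y⁻¹ + m⁻¹ = (y - m)/(m*y) := by field_simp; ring
        have hmy : m*y ≤ c^2 := by nlinarith [mul_le_mul hmc (hy.2.le.trans hmc) hy0.le hc.le]
        have key : (y - m)/(m*y) ≤ (y - m)/c^2 := by
          rw [div_le_div_iff₀ (by positivity) (by positivity)]
          nlinarith [mul_nonneg (sub_nonneg.2 hy.2.le) (sub_nonneg.2 hmy)]
        linarith
    have := anti (Set.left_mem_Icc.2 h) (Set.right_mem_Icc.2 h) h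
    linarith [hFm ▸ this]

private lemma aux_upper (m d x : ℝ) (hd : 0 < d) (hdm : d ≤ m) (hdx : d ≤ x) :
    Real.log m - Real.log x + (x - m)/m ≤ (x - m)^2 / (2*d^2) := by
  have hm : 0 < m := lt_of_lt_of_le hd hdm
  have hx : 0 < x := lt_of_lt_of_le hd hdx
  suffices h : Real.log m - Real.log x + (x - m)/m - (x - m)^2/(2*d^2) ≤ 0 by linarith
  set F := fun t => Real.log m - Real.log t + (t - m)/m - (t - m)^2/(2*d^2) with hF
  show F x ≤ 0
  have hFm : F m = 0 := by simp [hF]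
  rcases le_total m x with h | h
  · have anti : AntitoneOn F (Set.Icc m x) := by
      apply antitoneOn_of_deriv_nonpos (convex_Icc m x)
      · exact cont_aux m d _ (fun y hy => (lt_of_lt_of_le hm hy.1).ne')
      · intro y hy
        rw [interior_Icc] at hy
        exact ((hasDeriv_aux m d y (lt_trans hm hy.1).ne' hd.ne').differentiableAt).differentiableWithinAt
      · intro y hy
        rw [interior_Icc] at hy
        have hy0 : 0 < y := lt_trans hm hy.1
        rw [(hasDeriv_aux m d y hy0.ne' hd.ne').deriv]
        have e : -y⁻¹ + m⁻¹ = (y - m)/(m*y) := by field_simp; ring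
        have hmy : d^2 ≤ m*y := by nlinarith [mul_le_mul hdm (hdm.trans hy.1.le) hd.le hm.le]
        have key : (y - m)/(m*y) ≤ (y - m)/d^2 := by
          rw [div_le_div_iff₀ (by positivity) (by positivity)]
          nlinarith [mul_nonneg (sub_nonneg.2 hy.1.le) (sub_nonneg.2 hmy)]
        linarith
    have := anti (Set.left_mem_Icc.2 h) (Set.right_mem_Icc.2 h) h
    linarith [hFm ▸ this]
  · have mono : MonotoneOn F (Set.Icc x m) := by
      apply monotoneOn_of_deriv_nonneg (convex_Icc x m)
      · exact cont_aux m d _ (fun y hy => (lt_of_lt_of_le hx hy.1).ne')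
      · intro y hy
        rw [interior_Icc] at hy
        exact ((hasDeriv_aux m d y (lt_trans hx hy.1).ne' hd.ne').differentiableAt).differentiableWithinAt
      · intro y hy
        rw [interior_Icc] at hy
        have hy0 : 0 < y := lt_trans hx hy.1
        rw [(hasDeriv_aux m d y hy0.ne' hd.ne').deriv]
        have e : -y⁻¹ + m⁻¹ = (y - m)/(m*y) := by field_simp; ring
        have hmy : d^2 ≤ m*y := by nlinarith [mul_le_mul hdm (hdx.trans hy.1.le) hd.le hm.le]
        have key : (y - m)/d^2 ≤ (y - m)/(m*y) := by
          rw [div_le_div_iff₀ (by positivity) (by positivity)]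
          nlinarith [mul_nonneg (sub_nonneg.2 hy.2.le) (sub_nonneg.2 hmy)]
        linarith
    have := mono (Set.left_mem_Icc.2 h) (Set.right_mem_Icc.2 h) h
    linarith [hFm ▸ this]

/-- For a random variable X with 0 < a < X < b < ∞ almost surely, the Jensen gap satisfies
Var(X)/(2b²) ≤ log(E[X]) − E[log X] ≤ Var(X)/(2a²). -/
theorem stmt_0 {Ω : Type*} [MeasurableSpace Ω] (μ : Measure Ω) [IsProbabilityMeasure μ]
    (X : Ω → ℝ) (a b : ℝ) (ha : 0 < a) (hab : a < b)
    (hbd : ∀ᵐ ω ∂μ, a < X ω ∧ X ω < b)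
    (hX : Integrable X μ) (hX2 : Integrable (fun ω => X ω ^ 2) μ)
    (hlog : Integrable (fun ω => Real.log (X ω)) μ) :
    ((∫ ω, X ω ^ 2 ∂μ) - (∫ ω, X ω ∂μ) ^ 2) / (2 * b ^ 2)
      ≤ Real.log (∫ ω, X ω ∂μ) - ∫ ω, Real.log (X ω) ∂μ ∧
    Real.log (∫ ω, X ω ∂μ) - ∫ ω, Real.log (X ω) ∂μ
      ≤ ((∫ ω, X ω ^ 2 ∂μ) - (∫ ω, X ω ∂μ) ^ 2) / (2 * a ^ 2) := by
  set m := ∫ ω, X ω ∂μ with hm_def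
  have ham : a ≤ m := by
    have : ∫ _ω, a ∂μ ≤ ∫ ω, X ω ∂μ :=
      integral_mono_ae (integrable_const a) hX (hbd.mono fun ω h => h.1.le)
    simpa using this
  have hmb : m ≤ b := by
    have : ∫ ω, X ω ∂μ ≤ ∫ _ω, b ∂μ :=
      integral_mono_ae hX (integrable_const b) (hbd.mono fun ω h => h.2.le)
    simpa using this
  have hm0 : 0 < m := lt_of_lt_of_le ha ham
  -- named integrable pieces with the right lambda types
  have A1 : Integrable (fun ω => Real.log m - Real.log (X ω)) μ :=
    (integrable_const (Real.log m)).sub hlog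
  have A2 : Integrable (fun ω => (X ω - m)/m) μ :=
    (hX.sub (integrable_const m)).div_const m
  have A3 : Integrable (fun ω => X ω - m) μ := hX.sub (integrable_const m)
  have A4 : Integrable (fun ω => (2*m)*X ω) μ := hX.const_mul (2*m)
  have A5 : Integrable (fun ω => X ω ^ 2 - (2*m)*X ω) μ := hX2.sub A4
  have A6 : Integrable (fun ω => X ω ^ 2 - (2*m)*X ω + m^2) μ := A5.add (integrable_const (m^2))
  have IQ : ∀ c : ℝ, Integrable (fun ω => (X ω - m)^2/(2*c^2)) μ := by
    intro c
    have e : (fun ω => (X ω - m)^2/(2*c^2))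
        = fun ω => (X ω^2 - (2*m)*X ω + m^2) * (2*c^2)⁻¹ := by
      funext ω; rw [div_eq_mul_inv]; ring_nf
    rw [e]; exact A6.mul_const _
  have IR : Integrable (fun ω => Real.log m - Real.log (X ω) + (X ω - m)/m) μ := A1.add A2
  -- value of the middle integral
  have hR : ∫ ω, (Real.log m - Real.log (X ω) + (X ω - m)/m) ∂μ
      = Real.log m - ∫ ω, Real.log (X ω) ∂μ := by
    rw [integral_add A1 A2, integral_sub (integrable_const (Real.log m)) hlog, integral_div,
      integral_sub hX (integrable_const m), integral_const]
    simp [← hm_def]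
  -- value of the quadratic integrals
  have hQ : ∀ c : ℝ, ∫ ω, (X ω - m)^2/(2*c^2) ∂μ
      = ((∫ ω, X ω ^ 2 ∂μ) - m^2) / (2*c^2) := by
    intro c
    have e : (fun ω => (X ω - m)^2/(2*c^2))
        = fun ω => (X ω^2 - (2*m)*X ω + m^2) / (2*c^2) := by
      funext ω; ring_nf
    rw [e, integral_div, integral_add A5 (integrable_const (m^2)),
      integral_sub hX2 A4, integral_const_mul, integral_const]
    simp only [measure_univ, probReal_univ, ENNReal.toReal_one, smul_eq_mul, one_mul]
    rw [← hm_def]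
    congr 1
    ring
  -- a.e. pointwise bounds
  have hpt_lower : ∀ᵐ ω ∂μ, (X ω - m)^2/(2*b^2)
      ≤ Real.log m - Real.log (X ω) + (X ω - m)/m :=
    hbd.mono fun ω h =>
      aux_lower m b (X ω) hm0 (lt_trans ha h.1) hmb h.2.le
  have hpt_upper : ∀ᵐ ω ∂μ, Real.log m - Real.log (X ω) + (X ω - m)/m
      ≤ (X ω - m)^2/(2*a^2) :=
    hbd.mono fun ω h =>
      aux_upper m a (X ω) ha ham h.1.le
  have h1 := integral_mono_ae (IQ b) IR hpt_lower
  have h2 := integral_mono_ae IR (IQ a) hpt_upper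
  rw [hR, hQ b] at h1
  rw [hR, hQ a] at h2
  constructor
  · convert h1 using 2 <;> ring
  · convert h2 using 2 <;> ring
end

section
/- If L : ℝᵈ → ℝ is twice continuously differentiable and μ-strongly convex, then the tilted objective Lᵗ(θ) = (1/t) log E_ε[e^{t L(θ+ε)}] is μ-strongly convex, i.e., its Hessian satisfies ∇²Lᵗ(θ) ⪰ μI. -/
open MeasureTheory

/-- If L is twice continuously differentiable and m-strongly convex, then the tilted
objective Lᵗ(θ) = (1/t) log E_ε[e^{t L(θ+ε)}] is m-strongly convex. -/
theorem stmt_10 {d : ℕ} (L : EuclideanSpace ℝ (Fin d) → ℝ) (m : ℝ)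
    (hC2 : ContDiff ℝ 2 L) (hL : StrongConvexOn Set.univ m L) (t : ℝ) (ht : 0 < t)
    (μ : Measure (EuclideanSpace ℝ (Fin d))) [IsProbabilityMeasure μ]
    (hint : ∀ θ : EuclideanSpace ℝ (Fin d),
      Integrable (fun ε => Real.exp (t * L (θ + ε))) μ) :
    StrongConvexOn Set.univ m
      (fun θ : EuclideanSpace ℝ (Fin d) =>
        (1 / t) * Real.log (∫ ε, Real.exp (t * L (θ + ε)) ∂μ)) := by
  have hIpos : ∀ θ : EuclideanSpace ℝ (Fin d),
      0 < ∫ ε, Real.exp (t * L (θ + ε)) ∂μ := fun θ =>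
    integral_exp_pos (hint θ)
  -- membership in ℒ^{1/c} of exp(t L(z+·))^c
  have memA : ∀ (z : EuclideanSpace ℝ (Fin d)) (c : ℝ), 0 < c →
      MemLp (fun ε => Real.exp (t * L (z + ε)) ^ c) (ENNReal.ofReal (1 / c)) μ := by
    intro z c hc
    have A : ENNReal.ofReal (1 / c) ≠ 0 := by
      simp only [ne_eq, ENNReal.ofReal_eq_zero, not_le]
      positivity
    have B : ENNReal.ofReal (1 / c) ≠ ⊤ := ENNReal.ofReal_ne_top
    have hmeas : AEStronglyMeasurable (fun ε => Real.exp (t * L (z + ε)) ^ c) μ := by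
      refine Continuous.aestronglyMeasurable ?_
      have : Continuous fun ε : EuclideanSpace ℝ (Fin d) => Real.exp (t * L (z + ε)) :=
        (Real.continuous_exp.comp
          ((continuous_const.mul (hC2.continuous.comp (continuous_const.add continuous_id)))))
      exact this.rpow_const (fun x => Or.inl (Real.exp_pos _).ne')
    rw [← memLp_norm_rpow_iff hmeas A B,
      ENNReal.toReal_ofReal (one_div_nonneg.mpr hc.le),
      ENNReal.div_self A B, memLp_one_iff_integrable]
    refine (hint z).congr (Filter.Eventually.of_forall fun ε => ?_)
    dsimp only
    rw [Real.norm_of_nonneg (Real.rpow_nonneg (Real.exp_pos _).le _),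
      ← Real.rpow_mul (Real.exp_pos _).le, mul_one_div_cancel hc.ne', Real.rpow_one]
  constructor
  · exact convex_univ
  intro x _ y _ a b ha hb hab
  rcases eq_or_lt_of_le ha with ha0 | ha
  · have hb1 : b = 1 := by linarith
    simp [← ha0, hb1]
  rcases eq_or_lt_of_le hb with hb0 | hb
  · have ha1 : a = 1 := by linarith
    simp [← hb0, ha1]
  have ha1 : a < 1 := by linarith
  -- notation
  set c : ℝ := m / 2 * ‖x - y‖ ^ 2 with hc
  set F : EuclideanSpace ℝ (Fin d) → ℝ := fun ε => Real.exp (t * L (x + ε)) with hF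
  set G : EuclideanSpace ℝ (Fin d) → ℝ := fun ε => Real.exp (t * L (y + ε)) with hG
  -- pointwise bound from strong convexity
  have key : ∀ ε, Real.exp (t * L (a • x + b • y + ε)) ≤
      Real.exp (-(t * (a * b * c))) * (F ε ^ a * G ε ^ b) := by
    intro ε
    have hcv := hL.2 (Set.mem_univ (x + ε)) (Set.mem_univ (y + ε)) ha.le hb.le hab
    have hE : a • (x + ε) + b • (y + ε) = a • x + b • y + ε := by
      have hb' : b = 1 - a := by linarith
      subst hb'
      module
    have hnorm : (x + ε) - (y + ε) = x - y := by abel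
    rw [hE, hnorm] at hcv
    have hcv' := mul_le_mul_of_nonneg_left hcv ht.le
    have h1 : Real.exp (t * L (a • x + b • y + ε)) ≤
        Real.exp (t * (a • L (x + ε) + b • L (y + ε) - a * b * (m / 2 * ‖x - y‖ ^ 2))) :=
      Real.exp_le_exp.mpr hcv'
    refine h1.trans_eq ?_
    rw [hF, hG]
    simp only [smul_eq_mul]
    rw [← Real.exp_mul, ← Real.exp_mul, ← Real.exp_add, ← Real.exp_add]
    congr 1
    ring
  -- integrability of the product
  have hconj : (1 : ENNReal) / 1 = 1 / ENNReal.ofReal (1 / a) + 1 / ENNReal.ofReal (1 / b) := by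
    have h1 : ENNReal.ofReal (1 / a) = (ENNReal.ofReal a)⁻¹ := by
      rw [one_div, ENNReal.ofReal_inv_of_pos ha]
    have h2 : ENNReal.ofReal (1 / b) = (ENNReal.ofReal b)⁻¹ := by
      rw [one_div, ENNReal.ofReal_inv_of_pos hb]
    rw [h1, h2]
    simp only [one_div, inv_inv, inv_one]
    rw [← ENNReal.ofReal_add ha.le hb.le, hab, ENNReal.ofReal_one]
  have hInt2 : Integrable (fun ε => F ε ^ a * G ε ^ b) μ := by
    rw [← memLp_one_iff_integrable]
    haveI : ENNReal.HolderTriple (ENNReal.ofReal (1 / a)) (ENNReal.ofReal (1 / b)) 1 :=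
      ⟨by simpa only [one_div] using hconj.symm⟩
    exact MemLp.smul (memA y b hb) (memA x a ha)
  -- integrate the pointwise bound
  have step1 : (∫ ε, Real.exp (t * L (a • x + b • y + ε)) ∂μ) ≤
      Real.exp (-(t * (a * b * c))) * ∫ ε, F ε ^ a * G ε ^ b ∂μ := by
    rw [← integral_const_mul]
    exact integral_mono (hint _) (hInt2.const_mul _) key
  -- Hölder
  have hpq : Real.HolderConjugate (1 / a) (1 / b) := Real.holderConjugate_one_div ha hb hab
  have holder := integral_mul_le_Lp_mul_Lq_of_nonneg hpq
    (Filter.Eventually.of_forall fun ε => Real.rpow_nonneg (Real.exp_pos _).le a)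
    (Filter.Eventually.of_forall fun ε => Real.rpow_nonneg (Real.exp_pos _).le b)
    (memA x a ha) (memA y b hb)
  have e1 : (∫ ε, (F ε ^ a) ^ (1 / a) ∂μ) = ∫ ε, F ε ∂μ :=
    integral_congr_ae (Filter.Eventually.of_forall fun ε => by
      simp only [hF]
      rw [← Real.rpow_mul (Real.exp_pos _).le, mul_one_div_cancel ha.ne', Real.rpow_one])
  have e2 : (∫ ε, (G ε ^ b) ^ (1 / b) ∂μ) = ∫ ε, G ε ∂μ :=
    integral_congr_ae (Filter.Eventually.of_forall fun ε => by
      simp only [hG]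
      rw [← Real.rpow_mul (Real.exp_pos _).le, mul_one_div_cancel hb.ne', Real.rpow_one])
  rw [e1, e2, one_div_one_div, one_div_one_div] at holder
  -- combine
  have hcomb : (∫ ε, Real.exp (t * L (a • x + b • y + ε)) ∂μ) ≤
      Real.exp (-(t * (a * b * c))) * ((∫ ε, F ε ∂μ) ^ a * (∫ ε, G ε ∂μ) ^ b) :=
    step1.trans (mul_le_mul_of_nonneg_left holder (Real.exp_pos _).le)
  have hlog : Real.log (∫ ε, Real.exp (t * L (a • x + b • y + ε)) ∂μ) ≤
      -(t * (a * b * c)) + (a * Real.log (∫ ε, F ε ∂μ) + b * Real.log (∫ ε, G ε ∂μ)) := by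
    have hIx : 0 < ∫ ε, F ε ∂μ := hIpos x
    have hIy : 0 < ∫ ε, G ε ∂μ := hIpos y
    refine (Real.log_le_log (hIpos _) hcomb).trans_eq ?_
    rw [Real.log_mul (Real.exp_pos _).ne'
        (mul_pos (Real.rpow_pos_of_pos hIx a) (Real.rpow_pos_of_pos hIy b)).ne',
      Real.log_exp,
      Real.log_mul (Real.rpow_pos_of_pos hIx a).ne' (Real.rpow_pos_of_pos hIy b).ne',
      Real.log_rpow hIx, Real.log_rpow hIy]
  -- finish
  simp only [smul_eq_mul]
  have hfin := mul_le_mul_of_nonneg_left hlog (le_of_lt (by positivity : (0:ℝ) < 1 / t))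
  calc (1 / t) * Real.log (∫ ε, Real.exp (t * L (a • x + b • y + ε)) ∂μ) ≤
      (1 / t) * (-(t * (a * b * c)) + (a * Real.log (∫ ε, F ε ∂μ) + b * Real.log (∫ ε, G ε ∂μ))) :=
        hfin
    _ = a * ((1 / t) * Real.log (∫ ε, F ε ∂μ)) + b * ((1 / t) * Real.log (∫ ε, G ε ∂μ))
        - a * b * (m / 2 * ‖x - y‖ ^ 2) := by
      rw [hc]; field_simp; ring
end

section
/- For a bounded loss 0 ≤ L ≤ M and t > 0, the gap E_ε[L(θ+ε)] − (1/t) log E_ε[e^{t L(θ+ε)}] is at most −Var_ε(e^{tL(θ+ε)})/(2t e^{2tM}). -/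
open MeasureTheory

/-- Tangent-line inequality for `y ↦ -log y - y^2/(2 b^2)`, which is convex on `[1, b]`. -/
lemma key_log_ineq {b m x : ℝ} (hm1 : 1 ≤ m) (hmb : m ≤ b) (hx1 : 1 ≤ x) (hxb : x ≤ b) :
    Real.log x ≤ Real.log m + (x - m) / m - (x - m) ^ 2 / (2 * b ^ 2) := by
  have hb1 : (1 : ℝ) ≤ b := le_trans hm1 hmb
  have hb0 : (0 : ℝ) < b := lt_of_lt_of_le one_pos hb1
  have hm0 : (0 : ℝ) < m := lt_of_lt_of_le one_pos hm1
  have hx0 : (0 : ℝ) < x := lt_of_lt_of_le one_pos hx1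
  have hb2 : (0 : ℝ) < b ^ 2 := by positivity
  set f : ℝ → ℝ := fun y => -Real.log y - y ^ 2 / (2 * b ^ 2) with hf_def
  have hder : ∀ y : ℝ, 0 < y → HasDerivAt f (-(y⁻¹) - y / b ^ 2) y := by
    intro y hy
    have h1 : HasDerivAt Real.log y⁻¹ y := Real.hasDerivAt_log hy.ne'
    have h2 : HasDerivAt (fun z : ℝ => z ^ 2 / (2 * b ^ 2)) (y / b ^ 2) y := by
      have := (hasDerivAt_pow 2 y).div_const (2 * b ^ 2)
      refine this.congr_deriv ?_
      field_simp
      ring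
    exact h1.neg.sub h2
  have hder2 : ∀ y : ℝ, 0 < y →
      HasDerivAt (fun z => -(z⁻¹) - z / b ^ 2) (1 / y ^ 2 - 1 / b ^ 2) y := by
    intro y hy
    have h1 : HasDerivAt (fun z : ℝ => z⁻¹) (-(y ^ 2)⁻¹) y := hasDerivAt_inv hy.ne'
    have h2 : HasDerivAt (fun z : ℝ => z / b ^ 2) (1 / b ^ 2) y := by
      have := (hasDerivAt_id y).div_const (b ^ 2)
      simpa using this
    have := h1.neg.sub h2
    refine this.congr_deriv ?_
    field_simp
  have hconv : ConvexOn ℝ (Set.Icc 1 b) f := by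
    apply convexOn_of_hasDerivWithinAt2_nonneg (convex_Icc 1 b)
      (f' := fun y => -(y⁻¹) - y / b ^ 2) (f'' := fun y => 1 / y ^ 2 - 1 / b ^ 2)
    · apply ContinuousOn.sub
      · exact (Real.continuousOn_log.mono (by
          intro z hz
          simp only [Set.mem_compl_iff, Set.mem_singleton_iff]
          rcases hz with ⟨h1, _⟩
          intro h; rw [h] at h1; linarith)).neg
      · exact (continuousOn_pow 2).div_const _
    · intro y hy
      rw [interior_Icc] at hy
      exact ((hder y (lt_trans one_pos hy.1)).hasDerivWithinAt)
    · intro y hy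
      rw [interior_Icc] at hy
      exact ((hder2 y (lt_trans one_pos hy.1)).hasDerivWithinAt)
    · intro y hy
      rw [interior_Icc] at hy
      have hy0 : 0 < y := lt_trans one_pos hy.1
      have : y ^ 2 ≤ b ^ 2 := by nlinarith [hy.2]
      have := one_div_le_one_div_of_le (by positivity) this
      linarith
  have hmS : m ∈ Set.Icc 1 b := ⟨hm1, hmb⟩
  have hxS : x ∈ Set.Icc 1 b := ⟨hx1, hxb⟩
  have hderm := hder m hm0
  -- tangent inequality: f m + f'(m) * (x - m) ≤ f x
  have htan : f m + (-(m⁻¹) - m / b ^ 2) * (x - m) ≤ f x := by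
    rcases lt_trichotomy x m with h | h | h
    · have hs := hconv.slope_le_of_hasDerivAt hxS hmS h hderm
      rw [slope_def_field] at hs
      have hxm : 0 < m - x := by linarith
      rw [div_le_iff₀ hxm] at hs
      nlinarith [hs]
    · subst h; simp
    · have hs := hconv.le_slope_of_hasDerivAt hmS hxS h hderm
      rw [slope_def_field] at hs
      have hxm : 0 < x - m := by linarith
      rw [le_div_iff₀ hxm] at hs
      nlinarith [hs]
  have hfx : f x = -Real.log x - x ^ 2 / (2 * b ^ 2) := rfl
  have hfm : f m = -Real.log m - m ^ 2 / (2 * b ^ 2) := rfl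
  rw [hfx, hfm] at htan
  have heq : -(-Real.log m - m ^ 2 / (2 * b ^ 2)) - (-(m⁻¹) - m / b ^ 2) * (x - m)
      - x ^ 2 / (2 * b ^ 2)
      = Real.log m + (x - m) / m - (x - m) ^ 2 / (2 * b ^ 2) := by
    field_simp
    ring
  linarith [htan, heq.symm.le, heq.le]

/-- For bounded loss 0 ≤ L ≤ M and t > 0, the gap
E_ε[L(θ+ε)] − (1/t) log E_ε[e^{t L(θ+ε)}] is at most −Var_ε(e^{tL(θ+ε)})/(2t e^{2tM}). -/
theorem stmt_13 {d : ℕ} {Ω : Type*} [MeasurableSpace Ω]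
    (P : Measure Ω) [IsProbabilityMeasure P]
    (ε : Ω → EuclideanSpace ℝ (Fin d)) (hε : Measurable ε)
    (L : EuclideanSpace ℝ (Fin d) → ℝ) (hLm : Measurable L)
    (M : ℝ) (hM : 0 ≤ M) (hbd : ∀ x, 0 ≤ L x ∧ L x ≤ M)
    (t : ℝ) (ht : 0 < t) (θ : EuclideanSpace ℝ (Fin d)) :
    (∫ ω, L (θ + ε ω) ∂P)
        - (1 / t) * Real.log (∫ ω, Real.exp (t * L (θ + ε ω)) ∂P)
      ≤ -(((∫ ω, Real.exp (t * L (θ + ε ω)) ^ 2 ∂P)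
            - (∫ ω, Real.exp (t * L (θ + ε ω)) ∂P) ^ 2)
          / (2 * t * Real.exp (2 * t * M))) := by
  set g : Ω → ℝ := fun ω => L (θ + ε ω) with hg_def
  have hgmeas : Measurable g := hLm.comp (measurable_const.add hε)
  have hgbd : ∀ ω, 0 ≤ g ω ∧ g ω ≤ M := fun ω => hbd (θ + ε ω)
  set X : Ω → ℝ := fun ω => Real.exp (t * g ω) with hX_def
  have hXmeas : Measurable X := Real.measurable_exp.comp (measurable_const.mul hgmeas)
  set b : ℝ := Real.exp (t * M) with hb_def
  have hb1 : 1 ≤ b := Real.one_le_exp (by positivity)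
  have hb0 : 0 < b := lt_of_lt_of_le one_pos hb1
  have hXbd : ∀ ω, 1 ≤ X ω ∧ X ω ≤ b := by
    intro ω
    constructor
    · exact Real.one_le_exp (mul_nonneg ht.le (hgbd ω).1)
    · exact Real.exp_le_exp.2 (mul_le_mul_of_nonneg_left (hgbd ω).2 ht.le)
  have hgint : Integrable g P := by
    refine (integrable_const M).mono' hgmeas.aestronglyMeasurable ?_
    filter_upwards with ω
    rw [Real.norm_eq_abs, abs_of_nonneg (hgbd ω).1]
    exact (hgbd ω).2
  have hXint : Integrable X P := by
    refine (integrable_const b).mono' hXmeas.aestronglyMeasurable ?_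
    filter_upwards with ω
    rw [Real.norm_eq_abs, abs_of_nonneg (le_trans zero_le_one (hXbd ω).1)]
    exact (hXbd ω).2
  have hX2int : Integrable (fun ω => X ω ^ 2) P := by
    refine (integrable_const (b ^ 2)).mono' (hXmeas.pow_const 2).aestronglyMeasurable ?_
    filter_upwards with ω
    rw [Real.norm_eq_abs, abs_of_nonneg (sq_nonneg _)]
    have h1 := (hXbd ω).1
    have h2 := (hXbd ω).2
    nlinarith
  set m : ℝ := ∫ ω, X ω ∂P with hm_def
  have hm1 : 1 ≤ m := by
    have := integral_mono (integrable_const (1 : ℝ)) hXint (fun ω => (hXbd ω).1)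
    simpa using this
  have hmb : m ≤ b := by
    have := integral_mono hXint (integrable_const b) (fun ω => (hXbd ω).2)
    simpa using this
  have hm0 : 0 < m := lt_of_lt_of_le one_pos hm1
  -- pointwise inequality
  have hpt : ∀ ω, t * g ω ≤ Real.log m + (X ω - m) / m - (X ω - m) ^ 2 / (2 * b ^ 2) := by
    intro ω
    have := key_log_ineq hm1 hmb (hXbd ω).1 (hXbd ω).2
    rwa [hX_def, Real.log_exp] at this
  -- integrate
  have hint_rhs : Integrable
      (fun ω => Real.log m + (X ω - m) / m - (X ω - m) ^ 2 / (2 * b ^ 2)) P := by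
    have h1 : Integrable (fun ω => (X ω - m) ^ 2) P := by
      have : (fun ω => (X ω - m) ^ 2)
          = fun ω => X ω ^ 2 - (2 * m) * X ω + m ^ 2 := by
        funext ω; ring
      rw [this]
      exact (hX2int.sub (hXint.const_mul (2 * m))).add (integrable_const _)
    exact ((integrable_const _).add ((hXint.sub (integrable_const m)).div_const m)).sub
      (h1.div_const _)
  have hlhs_int : Integrable (fun ω => t * g ω) P := hgint.const_mul t
  have hImono := integral_mono hlhs_int hint_rhs hpt
  have hIlhs : ∫ ω, t * g ω ∂P = t * ∫ ω, g ω ∂P := integral_const_mul t g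
  have hA : Integrable (fun ω => X ω ^ 2 - 2 * m * X ω) P :=
    hX2int.sub (hXint.const_mul (2 * m))
  have hB : Integrable (fun ω => X ω - m) P := hXint.sub (integrable_const m)
  have hC : Integrable (fun ω => (X ω - m) / m) P := hB.div_const m
  have hD : Integrable (fun ω => Real.log m + (X ω - m) / m) P := (integrable_const _).add hC
  have hIXm : ∫ ω, (X ω - m) ∂P = 0 := by
    rw [integral_sub hXint (integrable_const m), integral_const]
    simp [← hm_def]
  have hIX2 : ∫ ω, (X ω - m) ^ 2 ∂P = (∫ ω, X ω ^ 2 ∂P) - m ^ 2 := by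
    have h1 : (fun ω => (X ω - m) ^ 2)
        = fun ω => X ω ^ 2 - 2 * m * X ω + m ^ 2 := by
      funext ω; ring
    rw [h1, integral_add hA (integrable_const _),
      integral_sub hX2int (hXint.const_mul (2 * m)), integral_const_mul,
      integral_const]
    simp [← hm_def]
    ring
  have hE : Integrable (fun ω => (X ω - m) ^ 2) P := by
    have h1 : (fun ω => (X ω - m) ^ 2)
        = fun ω => X ω ^ 2 - 2 * m * X ω + m ^ 2 := by
      funext ω; ring
    rw [h1]
    exact hA.add (integrable_const _)
  have hF : Integrable (fun ω => (X ω - m) ^ 2 / (2 * b ^ 2)) P := hE.div_const _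
  have hIrhs : ∫ ω, (Real.log m + (X ω - m) / m - (X ω - m) ^ 2 / (2 * b ^ 2)) ∂P
      = Real.log m - ((∫ ω, X ω ^ 2 ∂P) - m ^ 2) / (2 * b ^ 2) := by
    rw [integral_sub hD hF, integral_add (integrable_const _) hC,
      integral_div, integral_div, hIXm, hIX2, integral_const]
    simp
  rw [hIlhs, hIrhs] at hImono
  -- final arithmetic
  have hexp : Real.exp (2 * t * M) = b ^ 2 := by
    rw [hb_def, sq, ← Real.exp_add]
    ring_nf
  set V : ℝ := (∫ ω, X ω ^ 2 ∂P) - m ^ 2 with hV_def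
  have hb2 : (0 : ℝ) < b ^ 2 := by positivity
  have hgoal : (∫ ω, g ω ∂P) - (1 / t) * Real.log m ≤ -(V / (2 * t * b ^ 2)) := by
    have h1 : (∫ ω, g ω ∂P) - (1 / t) * Real.log m
        = (1 / t) * (t * (∫ ω, g ω ∂P) - Real.log m) := by
      field_simp
    have h2 : -(V / (2 * t * b ^ 2)) = (1 / t) * (-(V / (2 * b ^ 2))) := by
      rw [mul_neg, neg_inj, div_mul_eq_mul_div, one_mul, div_div]
      ring_nf
    rw [h1, h2]
    apply mul_le_mul_of_nonneg_left _ (by positivity : (0:ℝ) ≤ 1 / t)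
    linarith [hImono]
  rw [hexp]
  exact hgoal
end
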